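/- arXiv:math/0104120 — 9 statements merged into one kernel-verified Lean document; each statement's English description precedes it below -/
import Mathlib

section
/- Let S be a closed p-convex subset of ℝⁿ with 0 < p < 1, meaning that for all x, y ∈ S and all λ, μ ≥ 0 with λ^p + μ^p = 1 we have λx + μy ∈ S, and assume S is symmetric (x ∈ S implies -x ∈ S) and 0 ∈ S. Then for every 0 < θ < 1, the θ-geometric hull Γ_θ S is contained in (p^(-1/p)·(1-θ)^(1-1/p)) · S, where Γ_θ S is the set of all convergent sums (1-θ)·Σ_{k=0}^∞ λ_k x_k with |λ_k| ≤ θ^k and x_k ∈ S. -/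
open Pointwise

/-- The `θ`-geometric hull of a set `S`: all convergent sums
`(1-θ) • ∑ₖ λₖ • xₖ` with `|λₖ| ≤ θ^k` and `xₖ ∈ S`. -/
def geomHull {E : Type*} [NormedAddCommGroup E] [NormedSpace ℝ E]
    (θ : ℝ) (S : Set E) : Set E :=
  {y | ∃ (c : ℕ → ℝ) (x : ℕ → E), (∀ k, |c k| ≤ θ ^ k) ∧ (∀ k, x k ∈ S) ∧
    HasSum (fun k => ((1 - θ) * c k) • x k) y}

section Aux

variable {E : Type*} [NormedAddCommGroup E] [NormedSpace ℝ E]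
variable {p : ℝ} (hp0 : 0 < p) {S : Set E}
variable (h0 : (0 : E) ∈ S)
variable (hpconv : ∀ x ∈ S, ∀ y ∈ S, ∀ a b : ℝ, 0 ≤ a → 0 ≤ b → a ^ p + b ^ p = 1 →
      a • x + b • y ∈ S)

include hp0 h0 hpconv

lemma aux_shrink {x : E} (hx : x ∈ S) {t : ℝ} (ht0 : 0 ≤ t) (ht1 : t ≤ 1) : t • x ∈ S := by
  have htp : t ^ p ≤ 1 := Real.rpow_le_one ht0 ht1 hp0.le
  have hb0 : (0:ℝ) ≤ (1 - t ^ p) ^ (1 / p) := Real.rpow_nonneg (by linarith) _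
  have hbp : ((1 - t ^ p) ^ (1 / p)) ^ p = 1 - t ^ p := by
    rw [← Real.rpow_mul (by linarith), one_div_mul_cancel hp0.ne', Real.rpow_one]
  have := hpconv x hx 0 h0 t _ ht0 hb0 (by rw [hbp]; ring)
  simpa using this

lemma aux_pconv_le {x y : E} (hx : x ∈ S) (hy : y ∈ S) {a b : ℝ} (ha : 0 ≤ a) (hb : 0 ≤ b)
    (hab : a ^ p + b ^ p ≤ 1) : a • x + b • y ∈ S := by
  have hap : 0 ≤ a ^ p := Real.rpow_nonneg ha _
  have hbp : 0 ≤ b ^ p := Real.rpow_nonneg hb _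
  rcases eq_or_lt_of_le (by positivity : (0:ℝ) ≤ a ^ p + b ^ p) with hs | hs
  · have ha0 : a = 0 := by
      have : a ^ p = 0 := by linarith
      rwa [Real.rpow_eq_zero ha hp0.ne', ] at this
    have hb0 : b = 0 := by
      have : b ^ p = 0 := by linarith
      rwa [Real.rpow_eq_zero hb hp0.ne'] at this
    simpa [ha0, hb0] using h0
  · set s := a ^ p + b ^ p with hsdef
    set t := s ^ (1 / p) with htdef
    have ht0 : 0 < t := Real.rpow_pos_of_pos hs _
    have htp : t ^ p = s := by
      rw [htdef, ← Real.rpow_mul hs.le, one_div_mul_cancel hp0.ne', Real.rpow_one]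
    have hatp : (a / t) ^ p = a ^ p / s := by
      rw [Real.div_rpow ha ht0.le, htp]
    have hbtp : (b / t) ^ p = b ^ p / s := by
      rw [Real.div_rpow hb ht0.le, htp]
    have hmem : (a / t) • x + (b / t) • y ∈ S := by
      refine hpconv x hx y hy _ _ (by positivity) (by positivity) ?_
      rw [hatp, hbtp, ← add_div, div_self hs.ne']
    have ht1 : t ≤ 1 := Real.rpow_le_one (by positivity) hab (by positivity)
    have := aux_shrink hp0 h0 hpconv hmem ht0.le ht1
    rwa [smul_add, smul_smul, smul_smul, mul_div_cancel₀ _ ht0.ne', mul_div_cancel₀ _ ht0.ne']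
      at this

lemma aux_finite :
    ∀ N (a : ℕ → ℝ), (∀ k, 0 ≤ a k) → ∀ (x : ℕ → E), (∀ k, x k ∈ S) →
      (∑ k ∈ Finset.range N, (a k) ^ p) ≤ 1 →
      (∑ k ∈ Finset.range N, a k • x k) ∈ S := by
  intro N
  induction N with
  | zero => intro a _ x _ _; simpa using h0
  | succ N ih =>
    intro a ha x hx hsum
    rw [Finset.sum_range_succ] at hsum ⊢
    set s := ∑ k ∈ Finset.range N, (a k) ^ p with hsdef
    have hs0 : 0 ≤ s := Finset.sum_nonneg fun k _ => Real.rpow_nonneg (ha k) _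
    have haNp : 0 ≤ a N ^ p := Real.rpow_nonneg (ha N) _
    rcases eq_or_lt_of_le hs0 with hs | hs
    · have hzero : ∀ k ∈ Finset.range N, a k • x k = 0 := by
        intro k hk
        have h1 : (a k) ^ p = 0 := by
          have := (Finset.sum_eq_zero_iff_of_nonneg
            (fun k _ => Real.rpow_nonneg (ha k) p)).1 hs.symm k hk
          exact this
        have : a k = 0 := by rwa [Real.rpow_eq_zero (ha k) hp0.ne'] at h1
        simp [this]
      rw [Finset.sum_eq_zero hzero, zero_add]
      have haN1 : a N ≤ 1 := by
        by_contra h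
        push_neg at h
        have := (Real.one_lt_rpow_iff_of_pos (lt_trans one_pos h) (y := p)).2 (Or.inl ⟨h, hp0⟩)
        linarith
      exact aux_shrink hp0 h0 hpconv (hx N) (ha N) haN1
    · set t := s ^ (1 / p) with htdef
      have ht0 : 0 < t := Real.rpow_pos_of_pos hs _
      have htp : t ^ p = s := by
        rw [htdef, ← Real.rpow_mul hs.le, one_div_mul_cancel hp0.ne', Real.rpow_one]
      have hw : (∑ k ∈ Finset.range N, (a k / t) • x k) ∈ S := by
        refine ih (fun k => a k / t) (fun k => div_nonneg (ha k) ht0.le) x hx ?_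
        have : ∑ k ∈ Finset.range N, (a k / t) ^ p
            = ∑ k ∈ Finset.range N, (a k) ^ p / s := by
          refine Finset.sum_congr rfl fun k _ => ?_
          rw [Real.div_rpow (ha k) ht0.le, htp]
        rw [this, ← Finset.sum_div, ← hsdef, div_self hs.ne']
      have key : t • (∑ k ∈ Finset.range N, (a k / t) • x k) + a N • x N ∈ S := by
        refine aux_pconv_le hp0 h0 hpconv hw (hx N) ht0.le (ha N) ?_
        rw [htp]; exact hsum
      have : t • (∑ k ∈ Finset.range N, (a k / t) • x k)
          = ∑ k ∈ Finset.range N, a k • x k := by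
        rw [Finset.smul_sum]
        refine Finset.sum_congr rfl fun k _ => ?_
        rw [smul_smul, mul_div_cancel₀ _ ht0.ne']
      rwa [this] at key

lemma aux_infinite (hclosed : IsClosed S) (a : ℕ → ℝ) (ha : ∀ k, 0 ≤ a k)
    (x : ℕ → E) (hx : ∀ k, x k ∈ S)
    (hbound : ∀ N, (∑ k ∈ Finset.range N, (a k) ^ p) ≤ 1)
    {y : E} (hy : HasSum (fun k => a k • x k) y) : y ∈ S := by
  refine hclosed.mem_of_tendsto hy.tendsto_sum_nat
    (Filter.Eventually.of_forall fun N => ?_)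
  exact aux_finite hp0 h0 hpconv N a ha x hx (hbound N)

end Aux

theorem stmt_2 (n : ℕ) (p θ : ℝ) (hp0 : 0 < p) (hp1 : p < 1) (hθ0 : 0 < θ) (hθ1 : θ < 1)
    (S : Set (EuclideanSpace ℝ (Fin n))) (hclosed : IsClosed S) (h0 : (0 : EuclideanSpace ℝ (Fin n)) ∈ S)
    (hsymm : ∀ x ∈ S, -x ∈ S)
    (hpconv : ∀ x ∈ S, ∀ y ∈ S, ∀ a b : ℝ, 0 ≤ a → 0 ≤ b → a ^ p + b ^ p = 1 →
      a • x + b • y ∈ S) :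
    geomHull θ S ⊆ (p ^ (-(1 / p)) * (1 - θ) ^ (1 - 1 / p)) • S := by
  set M : ℝ := p ^ (-(1 / p)) * (1 - θ) ^ (1 - 1 / p) with hMdef
  have hθ' : (0:ℝ) < 1 - θ := by linarith
  have hM : 0 < M := mul_pos (Real.rpow_pos_of_pos hp0 _) (Real.rpow_pos_of_pos hθ' _)
  -- M⁻¹ * (1-θ) = (p*(1-θ))^(1/p)
  have hMid : M * (p * (1 - θ)) ^ (1 / p) = 1 - θ := by
    rw [Real.mul_rpow hp0.le hθ'.le, hMdef]
    rw [mul_mul_mul_comm, ← Real.rpow_add hp0, ← Real.rpow_add hθ']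
    rw [neg_add_cancel, Real.rpow_zero, one_mul, sub_add_cancel, Real.rpow_one]
  -- key inequality : p * (1 - θ) ≤ 1 - θ^p
  have hkey : p * (1 - θ) ≤ 1 - θ ^ p := by
    have := rpow_one_add_le_one_add_mul_self (s := θ - 1) (by linarith) hp0.le hp1.le
    have h2 : (1 + (θ - 1)) = θ := by ring
    rw [h2] at this
    nlinarith [this]
  have hθp1 : θ ^ p < 1 := Real.rpow_lt_one hθ0.le hθ1 hp0
  have hθp0 : 0 < θ ^ p := Real.rpow_pos_of_pos hθ0 _
  rintro y ⟨c, x, hc, hx, hy⟩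
  refine Set.mem_smul_set.2 ⟨M⁻¹ • y, ?_, smul_inv_smul₀ hM.ne' y⟩
  -- signed points
  set x' : ℕ → EuclideanSpace ℝ (Fin n) := fun k => if 0 ≤ c k then x k else -(x k) with hx'def
  have hx' : ∀ k, x' k ∈ S := by
    intro k
    by_cases h : 0 ≤ c k <;> simp only [hx'def, h, if_true, if_false] <;>
      [exact hx k; exact hsymm _ (hx k)]
  set a : ℕ → ℝ := fun k => M⁻¹ * ((1 - θ) * |c k|) with hadef
  have ha : ∀ k, 0 ≤ a k := fun k => by positivity
  have hfun : ∀ k, a k • x' k = M⁻¹ • (((1 - θ) * c k) • x k) := by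
    intro k
    by_cases h : 0 ≤ c k
    · simp only [hadef, hx'def, h, if_true, abs_of_nonneg h, smul_smul]
    · push_neg at h
      simp only [hadef, hx'def, not_le.2 h, if_false, abs_of_neg h, smul_neg, smul_smul]
      rw [← neg_smul]
      ring_nf
  have hy' : HasSum (fun k => a k • x' k) (M⁻¹ • y) := by
    have := hy.const_smul (M⁻¹ : ℝ)
    simpa only [hfun] using this
  -- the partial sum bound
  have hbound : ∀ N, (∑ k ∈ Finset.range N, (a k) ^ p) ≤ 1 := by
    intro N
    have hterm : ∀ k, (a k) ^ p ≤ (p * (1 - θ)) * (θ ^ p) ^ k := by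
      intro k
      have h1 : a k ≤ M⁻¹ * ((1 - θ) * θ ^ k) := by
        have := hc k
        have h2 : (0:ℝ) ≤ M⁻¹ * (1 - θ) := by positivity
        calc a k = (M⁻¹ * (1 - θ)) * |c k| := by rw [hadef]; ring
          _ ≤ (M⁻¹ * (1 - θ)) * θ ^ k := by
              exact mul_le_mul_of_nonneg_left (hc k) h2
          _ = M⁻¹ * ((1 - θ) * θ ^ k) := by ring
      have h3 : (a k) ^ p ≤ (M⁻¹ * ((1 - θ) * θ ^ k)) ^ p :=
        Real.rpow_le_rpow (ha k) h1 hp0.le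
      refine h3.trans_eq ?_
      have hMinv : M⁻¹ * (1 - θ) = (p * (1 - θ)) ^ (1 / p) := by
        field_simp
        rw [mul_comm] at hMid
        rw [mul_comm (1 - θ) p]
        linarith [hMid]
      have : M⁻¹ * ((1 - θ) * θ ^ k) = (p * (1 - θ)) ^ (1 / p) * θ ^ k := by
        rw [← hMinv]; ring
      rw [this, Real.mul_rpow (by positivity) (by positivity),
        ← Real.rpow_natCast θ k, ← Real.rpow_natCast (θ ^ p) k,
        ← Real.rpow_mul hθ0.le, ← Real.rpow_mul hθ0.le,
        ← Real.rpow_mul (by positivity : (0:ℝ) ≤ p * (1 - θ)),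
        one_div_mul_cancel hp0.ne', Real.rpow_one, mul_comm p (k:ℝ)]
    calc (∑ k ∈ Finset.range N, (a k) ^ p)
        ≤ ∑ k ∈ Finset.range N, (p * (1 - θ)) * (θ ^ p) ^ k :=
          Finset.sum_le_sum fun k _ => hterm k
      _ = (p * (1 - θ)) * ∑ k ∈ Finset.range N, (θ ^ p) ^ k := by
          rw [Finset.mul_sum]
      _ ≤ (p * (1 - θ)) * (1 - θ ^ p)⁻¹ := by
          refine mul_le_mul_of_nonneg_left ?_ (by positivity)
          have hsummable : Summable (fun k : ℕ => (θ ^ p) ^ k) :=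
            summable_geometric_of_lt_one hθp0.le hθp1
          have := Summable.sum_le_tsum (Finset.range N) (fun k _ => by positivity) hsummable
          rwa [tsum_geometric_of_lt_one hθp0.le hθp1] at this
      _ ≤ 1 := by
          rw [← div_eq_mul_inv, div_le_one (by linarith)]
          exact hkey
  exact aux_infinite hp0 h0 hpconv hclosed a ha x' hx' hbound hy'
end

section
/- For any subset S of ℝⁿ and any 0 < α < θ < 1, the α-geometric hull satisfies Γ_α S ⊆ ((1-α)/(1-θ)) · Γ_θ S. -/
open Pointwise

theorem stmt_3 (n : ℕ) (S : Set (EuclideanSpace ℝ (Fin n))) (α θ : ℝ)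
    (hα0 : 0 < α) (hαθ : α < θ) (hθ1 : θ < 1) :
    geomHull α S ⊆ ((1 - α) / (1 - θ)) • geomHull θ S := by
  rintro y ⟨c, x, hc, hx, hsum⟩
  have hα1 : (1 : ℝ) - α ≠ 0 := by nlinarith
  have hθ1' : (1 : ℝ) - θ ≠ 0 := by nlinarith
  refine ⟨((1 - θ) / (1 - α)) • y, ⟨c, x, ?_, hx, ?_⟩, ?_⟩
  · intro k
    exact (hc k).trans (pow_le_pow_left₀ hα0.le hαθ.le k)
  · have := hsum.const_smul ((1 - θ) / (1 - α))
    convert this using 2 with k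
    rw [smul_smul]
    congr 1
    field_simp
  · show ((1 - α) / (1 - θ)) • ((1 - θ) / (1 - α)) • y = y
    rw [smul_smul, div_mul_div_comm, mul_comm (1 - α) (1 - θ),
      div_self (mul_ne_zero hθ1' hα1), one_smul]
end

section
/- For any real θ with 1/3 < θ < 1 and any positive integer m, (θ^{-1} - 1)/(m·(θ^{-1/m} - 1)) ≤ (θ^{-1} - 1)/|ln θ| ≤ 2/(3 - θ^{-1}). -/
lemma key_log_ineq (t : ℝ) (ht : 1 ≤ t) : (t - 1) * (3 - t) ≤ 2 * Real.log t := by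
  have hmono : MonotoneOn (fun x : ℝ => 2 * Real.log x - (x - 1) * (3 - x)) (Set.Ici 1) := by
    apply monotoneOn_of_deriv_nonneg (convex_Ici 1)
    · intro x hx
      have hx0 : x ≠ 0 := ne_of_gt (lt_of_lt_of_le one_pos hx)
      exact ((continuousAt_const.mul (Real.continuousAt_log hx0)).sub
        (by fun_prop : ContinuousAt (fun x : ℝ => (x - 1) * (3 - x)) x)).continuousWithinAt
    · intro x hx
      rw [interior_Ici] at hx
      have hx0 : x ≠ 0 := ne_of_gt (lt_trans one_pos hx)
      exact (((Real.differentiableAt_log hx0).const_mul 2).sub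
        (by fun_prop : DifferentiableAt ℝ (fun x : ℝ => (x - 1) * (3 - x)) x)).differentiableWithinAt
    · intro x hx
      rw [interior_Ici] at hx
      have hx1 : (1:ℝ) < x := hx
      have hxpos : (0:ℝ) < x := lt_trans one_pos hx1
      have hx0 : x ≠ 0 := ne_of_gt hxpos
      have hd : HasDerivAt (fun x : ℝ => 2 * Real.log x - (x - 1) * (3 - x))
          (2 * x⁻¹ - ((3 - x) + (x - 1) * (-1))) x := by
        have ha : HasDerivAt (fun x : ℝ => x - 1) 1 x := (hasDerivAt_id x).sub_const 1
        have hb : HasDerivAt (fun x : ℝ => 3 - x) (-1) x := by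
          simpa using (hasDerivAt_id' x).const_sub 3
        have h2 : HasDerivAt (fun x : ℝ => (x - 1) * (3 - x)) ((3 - x) + (x - 1) * (-1)) x := by
          exact (ha.mul hb).congr_deriv (by ring)
        exact ((Real.hasDerivAt_log hx0).const_mul 2).sub h2
      rw [hd.deriv]
      have h2x : 2 * x⁻¹ = 2 / x := by ring
      rw [h2x, sub_nonneg]
      rw [le_div_iff₀ hxpos]
      nlinarith [sq_nonneg (x - 1)]
  have h := hmono (Set.self_mem_Ici) (Set.mem_Ici.mpr ht) ht
  simp only [Real.log_one] at h
  nlinarith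

theorem stmt_5 (θ : ℝ) (m : ℕ) (hθ0 : 1 / 3 < θ) (hθ1 : θ < 1) (hm : 0 < m) :
    (θ⁻¹ - 1) / (m * (θ ^ (-(1 / (m : ℝ))) - 1)) ≤ (θ⁻¹ - 1) / |Real.log θ| ∧
    (θ⁻¹ - 1) / |Real.log θ| ≤ 2 / (3 - θ⁻¹) := by
  have hθpos : 0 < θ := lt_trans (by norm_num) hθ0
  have hlogθ : Real.log θ < 0 := Real.log_neg hθpos hθ1
  have habs : |Real.log θ| = Real.log θ⁻¹ := by
    rw [Real.log_inv, abs_of_neg hlogθ]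
  have ht1 : 1 < θ⁻¹ := one_lt_inv_iff₀.mpr ⟨hθpos, hθ1⟩
  have ht3 : θ⁻¹ < 3 := by
    have := inv_strictAnti₀ (by norm_num : (0:ℝ) < 1/3) hθ0
    norm_num at this; linarith
  have hlogt : 0 < Real.log θ⁻¹ := Real.log_pos ht1
  have hm0 : (0:ℝ) < (m:ℝ) := by exact_mod_cast hm
  have hrpow : θ ^ (-(1 / (m : ℝ))) = Real.exp (Real.log θ⁻¹ / m) := by
    rw [Real.rpow_def_of_pos hθpos]
    rw [Real.log_inv]
    ring_nf
  have hD : Real.log θ⁻¹ ≤ (m : ℝ) * (θ ^ (-(1 / (m : ℝ))) - 1) := by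
    rw [hrpow]
    have h := Real.add_one_le_exp (Real.log θ⁻¹ / m)
    have hdiv : (m : ℝ) * (Real.log θ⁻¹ / m) = Real.log θ⁻¹ := by field_simp
    nlinarith
  constructor
  · rw [habs]
    exact div_le_div_of_nonneg_left (by linarith) hlogt hD
  · rw [habs]
    rw [div_le_div_iff₀ hlogt (by linarith : (0:ℝ) < 3 - θ⁻¹)]
    have := key_log_ineq θ⁻¹ ht1.le
    nlinarith
end

section
/- Let X be a real normed space and for each positive integer N let b_N denote the least constant such that for every choice of vectors x_1, …, x_N ∈ X there is a choice of signs ε_k = ±1 with ‖Σ ε_k x_k‖ ≤ b_N · N · max_k ‖x_k‖. Then for all positive integers k, l: b_{kl} ≤ b_k · b_l, and (k+l)·b_{k+l} ≤ k·b_k + l·b_l. -/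
/-- `b` is the least constant such that for every `N` vectors `x₁,…,x_N` in `X`
there exist signs `ε_k = ±1` with `‖∑ ε_k x_k‖ ≤ b · N · max_k ‖x_k‖`. -/
def IsLeastSignBalance (X : Type*) [NormedAddCommGroup X] [NormedSpace ℝ X]
    (N : ℕ) (b : ℝ) : Prop :=
  IsLeast {c : ℝ | 0 ≤ c ∧ ∀ x : Fin N → X, ∃ ε : Fin N → ℝ,
    (∀ k, ε k = 1 ∨ ε k = -1) ∧ ‖∑ k, ε k • x k‖ ≤ c * N * ⨆ k, ‖x k‖} b

private lemma norm_le_ciSup {N : ℕ} {X : Type*} [NormedAddCommGroup X]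
    (x : Fin N → X) (i : Fin N) : ‖x i‖ ≤ ⨆ j, ‖x j‖ :=
  le_ciSup (f := fun j => ‖x j‖) (Set.finite_range _).bddAbove i

private lemma ciSup_nonneg' {N : ℕ} {X : Type*} [NormedAddCommGroup X]
    (hN : 0 < N) (x : Fin N → X) : 0 ≤ ⨆ j, ‖x j‖ :=
  le_trans (norm_nonneg _) (norm_le_ciSup x ⟨0, hN⟩)

theorem stmt_6 {X : Type*} [NormedAddCommGroup X] [NormedSpace ℝ X]
    (k l : ℕ) (hk : 0 < k) (hl : 0 < l) (bk bl bkl bkpl : ℝ)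
    (h1 : IsLeastSignBalance X k bk) (h2 : IsLeastSignBalance X l bl)
    (h3 : IsLeastSignBalance X (k * l) bkl) (h4 : IsLeastSignBalance X (k + l) bkpl) :
    bkl ≤ bk * bl ∧ ((k : ℝ) + l) * bkpl ≤ k * bk + l * bl := by
  obtain ⟨⟨hbk0, hbk⟩, _⟩ := h1
  obtain ⟨⟨hbl0, hbl⟩, _⟩ := h2
  have hkpos : (0:ℝ) < k := Nat.cast_pos.mpr hk
  have hlpos : (0:ℝ) < l := Nat.cast_pos.mpr hl
  haveI : Nonempty (Fin k) := ⟨⟨0, hk⟩⟩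
  haveI : Nonempty (Fin l) := ⟨⟨0, hl⟩⟩
  constructor
  · -- submultiplicative
    apply h3.2
    refine ⟨mul_nonneg hbk0 hbl0, fun x => ?_⟩
    set e : Fin k × Fin l ≃ Fin (k * l) := finProdFinEquiv
    have S0 : 0 ≤ ⨆ m, ‖x m‖ := ciSup_nonneg' (Nat.mul_pos hk hl) x
    choose εf hεf hεfb using fun j : Fin l => hbk (fun i => x (e (i, j)))
    set y : Fin l → X := fun j => ∑ i, εf j i • x (e (i, j)) with hy
    obtain ⟨δ, hδ, hδb⟩ := hbl y
    refine ⟨fun m => δ (e.symm m).2 * εf (e.symm m).2 (e.symm m).1, fun m => ?_, ?_⟩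
    · rcases hδ (e.symm m).2 with h | h <;> rcases hεf (e.symm m).2 (e.symm m).1 with h' | h' <;>
        simp [h, h']
    · have hsum : ∑ m, (δ (e.symm m).2 * εf (e.symm m).2 (e.symm m).1) • x m
          = ∑ j, δ j • y j := by
        rw [← Equiv.sum_comp e (fun m => (δ (e.symm m).2 * εf (e.symm m).2 (e.symm m).1) • x m)]
        simp only [Equiv.symm_apply_apply]
        rw [Fintype.sum_prod_type_right]
        refine Finset.sum_congr rfl fun j _ => ?_
        rw [hy, Finset.smul_sum]
        refine Finset.sum_congr rfl fun i _ => ?_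
        rw [mul_smul]
      rw [hsum]
      have hyb : ∀ j, ‖y j‖ ≤ bk * k * ⨆ m, ‖x m‖ := fun j =>
        (hεfb j).trans (by
          gcongr
          exact ciSup_le fun i => norm_le_ciSup x _)
      calc ‖∑ j, δ j • y j‖ ≤ bl * l * ⨆ j, ‖y j‖ := hδb
        _ ≤ bl * l * (bk * k * ⨆ m, ‖x m‖) := by
            gcongr
            exact ciSup_le hyb
        _ = bk * bl * (k * l : ℕ) * ⨆ m, ‖x m‖ := by push_cast; ring
  · -- subadditive
    have key : bkpl ≤ (k * bk + l * bl) / (k + l) := by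
      apply h4.2
      constructor
      · positivity
      · intro x
        have S0 : 0 ≤ ⨆ m, ‖x m‖ := ciSup_nonneg' (Nat.add_pos_left hk l) x
        set e : Fin k ⊕ Fin l ≃ Fin (k + l) := finSumFinEquiv
        obtain ⟨ε1, hε1, hε1b⟩ := hbk (fun i => x (e (Sum.inl i)))
        obtain ⟨ε2, hε2, hε2b⟩ := hbl (fun i => x (e (Sum.inr i)))
        refine ⟨fun m => Sum.elim ε1 ε2 (e.symm m), fun m => ?_, ?_⟩
        · rcases hm : e.symm m with i | i <;>
            simp only [hm, Sum.elim_inl, Sum.elim_inr]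
          · exact hε1 i
          · exact hε2 i
        · have hsum : ∑ m, Sum.elim ε1 ε2 (e.symm m) • x m
              = (∑ i, ε1 i • x (e (Sum.inl i))) + ∑ i, ε2 i • x (e (Sum.inr i)) := by
            rw [← Equiv.sum_comp e (fun m => Sum.elim ε1 ε2 (e.symm m) • x m)]
            simp only [Equiv.symm_apply_apply]
            rw [Fintype.sum_sum_type]
            simp
          rw [hsum]
          have h1b : ‖∑ i, ε1 i • x (e (Sum.inl i))‖ ≤ bk * k * ⨆ m, ‖x m‖ :=
            hε1b.trans (by
              gcongr
              exact ciSup_le fun i => norm_le_ciSup x _)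
          have h2b : ‖∑ i, ε2 i • x (e (Sum.inr i))‖ ≤ bl * l * ⨆ m, ‖x m‖ :=
            hε2b.trans (by
              gcongr
              exact ciSup_le fun i => norm_le_ciSup x _)
          calc ‖(∑ i, ε1 i • x (e (Sum.inl i))) + ∑ i, ε2 i • x (e (Sum.inr i))‖
              ≤ bk * k * (⨆ m, ‖x m‖) + bl * l * ⨆ m, ‖x m‖ :=
                (norm_add_le _ _).trans (add_le_add h1b h2b)
            _ = (k * bk + l * bl) / (k + l) * (k + l : ℕ) * ⨆ m, ‖x m‖ := by
                push_cast
                field_simp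
    have hpos : (0:ℝ) < (k:ℝ) + l := by positivity
    calc ((k:ℝ) + l) * bkpl ≤ ((k:ℝ) + l) * ((k * bk + l * bl) / (k + l)) := by
          exact mul_le_mul_of_nonneg_left key hpos.le
      _ = k * bk + l * bl := by field_simp
end

section
/- Let X be a real normed space with sign-balancing constants b_N (the least constant such that for any N vectors there exist signs with ‖Σ ε_k x_k‖ ≤ b_N·N·max‖x_k‖). If b_k ≤ c₀ < 1 for some k, then b_l ≤ (1+c₀)/2 < 1 for every l with k ≤ l ≤ 2k. -/
theorem stmt_7 {X : Type*} [NormedAddCommGroup X] [NormedSpace ℝ X]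
    (b : ℕ → ℝ) (hb : ∀ N, IsLeastSignBalance X N (b N))
    (k : ℕ) (hk : 0 < k) (c₀ : ℝ) (hbk : b k ≤ c₀) (hc₀ : c₀ < 1) :
    ∀ l : ℕ, k ≤ l → l ≤ 2 * k → b l ≤ (1 + c₀) / 2 ∧ (1 + c₀) / 2 < 1 := by
  intro l hkl hl2k
  have hbk0 : (0:ℝ) ≤ b k := (hb k).1.1
  have hc0 : (0:ℝ) ≤ c₀ := hbk0.trans hbk
  refine ⟨?_, by linarith⟩
  obtain ⟨m, rfl⟩ : ∃ m, l = k + m := ⟨l - k, by omega⟩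
  have hmk : m ≤ k := by omega
  apply (hb (k+m)).2
  refine ⟨by positivity, ?_⟩
  intro x
  obtain ⟨ε₁, hε₁, hsum₁⟩ := (hb k).1.2 (fun i => x (Fin.castAdd m i))
  refine ⟨Fin.append ε₁ (fun _ => 1), ?_, ?_⟩
  · intro i
    refine Fin.addCases (fun j => ?_) (fun j => ?_) i
    · simpa [Fin.append_left] using hε₁ j
    · simp [Fin.append_right]
  · have hne : Nonempty (Fin (k+m)) := ⟨⟨0, by omega⟩⟩
    have hMbd : ∀ i, ‖x i‖ ≤ ⨆ i, ‖x i‖ := fun i =>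
      le_ciSup (Set.Finite.bddAbove (Set.finite_range (fun i => ‖x i‖))) i
    set M := ⨆ i, ‖x i‖ with hMdef
    have hM0 : 0 ≤ M := (norm_nonneg _).trans (hMbd ⟨0, by omega⟩)
    have hne1 : Nonempty (Fin k) := ⟨⟨0, hk⟩⟩
    have hsup1 : (⨆ i : Fin k, ‖x (Fin.castAdd m i)‖) ≤ M :=
      ciSup_le fun i => hMbd _
    have hsup1nn : 0 ≤ ⨆ i : Fin k, ‖x (Fin.castAdd m i)‖ :=
      (norm_nonneg _).trans (le_ciSup (Set.Finite.bddAbove (Set.finite_range (fun i : Fin k => ‖x (Fin.castAdd m i)‖))) (⟨0, hk⟩ : Fin k))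
    rw [Fin.sum_univ_add]
    simp only [Fin.append_left, Fin.append_right, one_smul]
    have hA : ‖∑ i : Fin k, ε₁ i • x (Fin.castAdd m i)‖ ≤ c₀ * k * M := by
      refine hsum₁.trans ?_
      have hkk : (0:ℝ) ≤ (k:ℝ) := Nat.cast_nonneg k
      nlinarith [mul_nonneg (mul_nonneg (sub_nonneg.2 hbk) hkk) hsup1nn,
        mul_nonneg (mul_nonneg hc0 hkk) (sub_nonneg.2 hsup1)]
    have hB : ‖∑ i : Fin m, x (Fin.natAdd k i)‖ ≤ m * M := by
      refine (norm_sum_le _ _).trans ?_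
      calc ∑ i : Fin m, ‖x (Fin.natAdd k i)‖ ≤ ∑ _i : Fin m, M :=
            Finset.sum_le_sum fun i _ => hMbd _
        _ = m * M := by simp [mul_comm]
    refine (norm_add_le _ _).trans ((add_le_add hA hB).trans ?_)
    have : c₀ * k + m ≤ (1 + c₀) / 2 * (k + m) := by
      have : (0:ℝ) ≤ ((k:ℝ) - m) * (1 - c₀) := by
        have : (m:ℝ) ≤ k := by exact_mod_cast hmk
        nlinarith
      nlinarith
    push_cast
    nlinarith
end

section
/- Let S be a compact spanning subset of ℝⁿ with absolutely convex hull ΔS equal to the unit ball of a norm ‖·‖_X, and let b_N be the sign-balancing constants of (ℝⁿ, ‖·‖_X). Then for every positive integers N and m: Δ_{2^k m} S ⊆ Δ_m S + (Σ_{j=1}^k b_{2^j m})·ΔS for every k ≥ 1, where Δ_m S = {(1/m)Σ_{i=1}^m λ_i x_i : |λ_i| ≤ 1, x_i ∈ S}. -/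
open Pointwise

/-- `Δ_m S`: the set of averages `(1/m) • ∑ₖ λₖ • xₖ` with `|λₖ| ≤ 1`, `xₖ ∈ S`. -/
def deltaM {E : Type*} [NormedAddCommGroup E] [NormedSpace ℝ E]
    (m : ℕ) (S : Set E) : Set E :=
  {y | ∃ (c : Fin m → ℝ) (x : Fin m → E), (∀ k, |c k| ≤ 1) ∧ (∀ k, x k ∈ S) ∧
    y = (m : ℝ)⁻¹ • ∑ k, c k • x k}

/-- `b` is the least constant such that for any `N` vectors there are signs `ε_k = ±1`
with `ν (∑ ε_k x_k) ≤ b · N · max_k ν (x_k)`, where `ν` is a given norm function. -/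
def IsLeastSignBalanceFor {E : Type*} [NormedAddCommGroup E] [NormedSpace ℝ E]
    (ν : E → ℝ) (N : ℕ) (b : ℝ) : Prop :=
  IsLeast {c : ℝ | 0 ≤ c ∧ ∀ x : Fin N → E, ∃ ε : Fin N → ℝ,
    (∀ k, ε k = 1 ∨ ε k = -1) ∧ ν (∑ k, ε k • x k) ≤ c * N * ⨆ k, ν (x k)} b

section Aux

variable {E : Type*} [NormedAddCommGroup E] [NormedSpace ℝ E]

lemma nu_nonneg (ν : E → ℝ) (hνadd : ∀ x y, ν (x + y) ≤ ν x + ν y)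
    (hνsmul : ∀ (a : ℝ) x, ν (a • x) = |a| * ν x) (x : E) : 0 ≤ ν x := by
  have h0 : ν 0 = 0 := by simpa using hνsmul 0 0
  have h1 : ν (-x) = ν x := by
    have := hνsmul (-1) x
    simpa using this
  have := hνadd x (-x)
  rw [add_neg_cancel, h0, h1] at this
  linarith

lemma nu_neg (ν : E → ℝ) (hνsmul : ∀ (a : ℝ) x, ν (a • x) = |a| * ν x) (x : E) :
    ν (-x) = ν x := by
  have := hνsmul (-1) x
  simpa using this

/-- Padding lemma: an `N⁻¹`-scaled sum over a finset of cardinality `≤ N` lies in `Δ_N S`. -/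
lemma smul_sum_mem_deltaM {S : Set E} {s₀ : E} (hs₀ : s₀ ∈ S) (N : ℕ)
    {ι : Type*} [Fintype ι] [DecidableEq ι]
    (M : Finset ι) (hM : M.card ≤ N) (c : ι → ℝ) (x : ι → E)
    (hc : ∀ k, |c k| ≤ 1) (hx : ∀ k, x k ∈ S) :
    (N : ℝ)⁻¹ • ∑ k ∈ M, c k • x k ∈ deltaM N S := by
  classical
  set e : M ≃ Fin M.card := M.equivFin with he
  set c' : Fin N → ℝ := fun i =>
    if h : (i : ℕ) < M.card then c (e.symm ⟨(i : ℕ), h⟩) else 0 with hc'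
  set x' : Fin N → E := fun i =>
    if h : (i : ℕ) < M.card then x (e.symm ⟨(i : ℕ), h⟩) else s₀ with hx'
  refine ⟨c', x', fun i => ?_, fun i => ?_, ?_⟩
  · rw [hc']; dsimp only
    split
    · exact hc _
    · simp
  · rw [hx']; dsimp only
    split
    · exact hx _
    · exact hs₀
  · congr 1
    -- the sum over M equals the padded sum over Fin N
    set g : ℕ → E := fun i =>
      if h : i < M.card then c (e.symm ⟨i, h⟩) • x (e.symm ⟨i, h⟩) else 0 with hg
    have hfin : ∀ i : Fin N, c' i • x' i = g (i : ℕ) := by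
      intro i
      rw [hc', hx', hg]; dsimp only
      by_cases h : (i : ℕ) < M.card
      · rw [dif_pos h, dif_pos h, dif_pos h]
      · rw [dif_neg h, dif_neg h, dif_neg h, zero_smul]
    calc ∑ k ∈ M, c k • x k
        = ∑ a : {y // y ∈ M}, c a • x a := (M.sum_attach (fun k => c k • x k)).symm
      _ = ∑ j : Fin M.card, c (e.symm j) • x (e.symm j) :=
          (Equiv.sum_comp e.symm (fun a : {y // y ∈ M} => c a • x a)).symm
      _ = ∑ j : Fin M.card, g (j : ℕ) := by
          refine Finset.sum_congr rfl fun j _ => ?_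
          rw [hg]; dsimp only
          rw [dif_pos j.isLt]
      _ = ∑ j ∈ Finset.range M.card, g j := Fin.sum_univ_eq_sum_range _ _
      _ = ∑ j ∈ Finset.range N, g j := by
          refine Finset.sum_subset (Finset.range_subset_range.2 hM) fun j _ hj => ?_
          rw [hg]; dsimp only
          rw [dif_neg (by simpa using hj)]
      _ = ∑ i : Fin N, g (i : ℕ) := (Fin.sum_univ_eq_sum_range _ _).symm
      _ = ∑ i : Fin N, c' i • x' i := by
          exact Finset.sum_congr rfl fun i _ => (hfin i).symm

/-- Key step: `Δ_{2N} S ⊆ Δ_N S + b_{2N} • ΔS`. -/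
lemma step_lemma {S : Set E} (hS : S.Nonempty)
    (ν : E → ℝ)
    (hν0 : ∀ x, ν x = 0 → x = 0)
    (hνadd : ∀ x y, ν (x + y) ≤ ν x + ν y)
    (hνsmul : ∀ (a : ℝ) x, ν (a • x) = |a| * ν x)
    (hball : {x | ν x ≤ 1} = convexHull ℝ (S ∪ -S))
    (b : ℝ) (hb0 : 0 ≤ b) (N : ℕ) (hN : 0 < N)
    (hbN : ∀ x : Fin (2 * N) → E, ∃ ε : Fin (2 * N) → ℝ,
      (∀ k, ε k = 1 ∨ ε k = -1) ∧
      ν (∑ k, ε k • x k) ≤ b * ((2 * N : ℕ) : ℝ) * ⨆ k, ν (x k)) :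
    deltaM (2 * N) S ⊆ deltaM N S + b • convexHull ℝ (S ∪ -S) := by
  classical
  obtain ⟨s₀, hs₀⟩ := hS
  rintro y ⟨c, x, hc, hx, rfl⟩
  haveI : Nonempty (Fin (2 * N)) := ⟨⟨0, by positivity⟩⟩
  have hnonneg := nu_nonneg ν hνadd hνsmul
  have hSν : ∀ z ∈ S, ν z ≤ 1 := by
    intro z hz
    have : z ∈ convexHull ℝ (S ∪ -S) := subset_convexHull ℝ _ (Or.inl hz)
    rw [← hball] at this
    exact this
  set v : Fin (2 * N) → E := fun k => c k • x k with hv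
  have hνv : ∀ k, ν (v k) ≤ 1 := by
    intro k
    rw [hv]; dsimp only
    rw [hνsmul]
    calc |c k| * ν (x k) ≤ 1 * 1 :=
          mul_le_mul (hc k) (hSν _ (hx k)) (hnonneg _) one_pos.le
      _ = 1 := one_mul 1
  have hsup : (⨆ k, ν (v k)) ≤ 1 := ciSup_le hνv
  have hbound0 : ∀ ε : Fin (2 * N) → ℝ,
      ν (∑ k, ε k • v k) ≤ b * ((2 * N : ℕ) : ℝ) * ⨆ k, ν (v k) →
      ν (∑ k, ε k • v k) ≤ b * ((2 * N : ℕ) : ℝ) := by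
    intro ε h
    calc ν (∑ k, ε k • v k) ≤ b * ((2 * N : ℕ) : ℝ) * ⨆ k, ν (v k) := h
      _ ≤ b * ((2 * N : ℕ) : ℝ) * 1 := by
          refine mul_le_mul_of_nonneg_left hsup ?_
          positivity
      _ = b * ((2 * N : ℕ) : ℝ) := mul_one _
  -- get a sign vector whose (-1)-set has cardinality ≤ N
  have key : ∃ ε : Fin (2 * N) → ℝ, (∀ k, ε k = 1 ∨ ε k = -1) ∧
      ν (∑ k, ε k • v k) ≤ b * ((2 * N : ℕ) : ℝ) ∧
      (Finset.univ.filter (fun k => ε k = -1)).card ≤ N := by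
    obtain ⟨ε, hε, hεν⟩ := hbN v
    have hcards : (Finset.univ.filter (fun k => ε k = -1)).card +
        (Finset.univ.filter (fun k => ¬ ε k = -1)).card = 2 * N := by
      rw [Finset.card_filter_add_card_filter_not]
      simp
    by_cases hcard : (Finset.univ.filter (fun k => ε k = -1)).card ≤ N
    · exact ⟨ε, hε, hbound0 ε hεν, hcard⟩
    · refine ⟨-ε, fun k => ?_, ?_, ?_⟩
      · rcases hε k with h | h <;> simp [h]
      · have hsum : ∑ k, (-ε) k • v k = -∑ k, ε k • v k := by
          rw [← Finset.sum_neg_distrib]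
          exact Finset.sum_congr rfl fun k _ => by simp [neg_smul]
        rw [hsum, nu_neg ν hνsmul]
        exact hbound0 ε hεν
      · have heq : (Finset.univ.filter (fun k => (-ε) k = -1)) =
            (Finset.univ.filter (fun k => ¬ ε k = -1)) := by
          refine Finset.filter_congr fun k _ => ?_
          rcases hε k with h | h <;> simp [h] <;> norm_num
        rw [heq]
        omega
  obtain ⟨ε, hε, hεν, hcard⟩ := key
  set M : Finset (Fin (2 * N)) := Finset.univ.filter (fun k => ε k = -1) with hM
  set w : E := ((2 * N : ℕ) : ℝ)⁻¹ • ∑ k, ε k • v k with hw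
  -- decumulate the sum
  have hsplit : ((2 * N : ℕ) : ℝ)⁻¹ • ∑ k, c k • x k =
      (N : ℝ)⁻¹ • (∑ k ∈ M, c k • x k) + w := by
    have h1 : ∑ k, c k • x k = (∑ k, (1 - ε k) • v k) + ∑ k, ε k • v k := by
      rw [← Finset.sum_add_distrib]
      refine Finset.sum_congr rfl fun k _ => ?_
      rw [← add_smul]
      simp [hv]
    have h2 : ∑ k, (1 - ε k) • v k = ∑ k ∈ M, (2 : ℝ) • v k := by
      rw [show (Finset.univ : Finset (Fin (2 * N))) = Finset.univ from rfl]
      rw [← Finset.sum_filter_add_sum_filter_not Finset.univ (fun k => ε k = -1)]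
      have hz : ∑ k ∈ Finset.univ.filter (fun k => ¬ ε k = -1), (1 - ε k) • v k = 0 := by
        refine Finset.sum_eq_zero fun k hk => ?_
        have hk1 : ε k = 1 := by
          rcases hε k with h | h
          · exact h
          · exact absurd h (by simpa using (Finset.mem_filter.1 hk).2)
        simp [hk1]
      rw [hz, add_zero]
      refine Finset.sum_congr rfl fun k hk => ?_
      have : ε k = -1 := (Finset.mem_filter.1 hk).2
      rw [this]
      norm_num
    have hNne : (N : ℝ) ≠ 0 := Nat.cast_ne_zero.2 hN.ne'
    have hcast : ((2 * N : ℕ) : ℝ) = 2 * (N : ℝ) := by push_cast; ring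
    rw [h1, smul_add, h2, hw]
    congr 1
    rw [Finset.smul_sum, Finset.smul_sum]
    refine Finset.sum_congr rfl fun k _ => ?_
    show ((2 * N : ℕ) : ℝ)⁻¹ • ((2 : ℝ) • v k) = (N : ℝ)⁻¹ • v k
    rw [smul_smul, hcast]
    congr 1
    field_simp
  rw [hsplit]
  refine Set.add_mem_add ?_ ?_
  · exact smul_sum_mem_deltaM hs₀ N M hcard c x hc hx
  · -- w ∈ b • B
    have hνw : ν w ≤ b := by
      have h2N : (0 : ℝ) < ((2 * N : ℕ) : ℝ) := by positivity
      rw [hw, hνsmul, abs_of_nonneg (inv_nonneg.2 h2N.le)]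
      calc ((2 * N : ℕ) : ℝ)⁻¹ * ν (∑ k, ε k • v k)
          ≤ ((2 * N : ℕ) : ℝ)⁻¹ * (b * ((2 * N : ℕ) : ℝ)) :=
            mul_le_mul_of_nonneg_left hεν (inv_nonneg.2 h2N.le)
        _ = b := by field_simp
    rcases eq_or_lt_of_le hb0 with hb | hb
    · have hw0 : ν w = 0 := le_antisymm (hb ▸ hνw) (hnonneg w)
      have : w = 0 := hν0 w hw0
      rw [this, ← hb, Set.zero_smul_set ⟨s₀, subset_convexHull ℝ _ (Or.inl hs₀)⟩]
      rfl
    · refine Set.mem_smul_set.2 ⟨b⁻¹ • w, ?_, ?_⟩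
      · rw [← hball]
        show ν (b⁻¹ • w) ≤ 1
        rw [hνsmul, abs_of_nonneg (inv_nonneg.2 hb.le)]
        calc b⁻¹ * ν w ≤ b⁻¹ * b := mul_le_mul_of_nonneg_left hνw (inv_nonneg.2 hb.le)
          _ = 1 := inv_mul_cancel₀ hb.ne'
      · rw [smul_inv_smul₀ hb.ne']

end Aux

theorem stmt_9 (n : ℕ) (S : Set (EuclideanSpace ℝ (Fin n)))
    (hScpt : IsCompact S) (hSspan : Submodule.span ℝ S = ⊤)
    (ν : EuclideanSpace ℝ (Fin n) → ℝ)
    (hν0 : ∀ x, ν x = 0 → x = 0)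
    (hνadd : ∀ x y, ν (x + y) ≤ ν x + ν y)
    (hνsmul : ∀ (a : ℝ) x, ν (a • x) = |a| * ν x)
    (hball : {x | ν x ≤ 1} = convexHull ℝ (S ∪ -S))
    (b : ℕ → ℝ) (hb : ∀ N, IsLeastSignBalanceFor ν N (b N))
    (m : ℕ) (hm : 0 < m) :
    ∀ k : ℕ, 1 ≤ k →
      deltaM (2 ^ k * m) S ⊆
        deltaM m S + (∑ j ∈ Finset.Icc 1 k, b (2 ^ j * m)) • convexHull ℝ (S ∪ -S) := by
  classical
  rcases S.eq_empty_or_nonempty with hSe | hS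
  · intro k hk y hy
    obtain ⟨c, x, hc, hx, rfl⟩ := hy
    exact absurd (hx ⟨0, by positivity⟩) (by simp [hSe])
  intro k
  induction k with
  | zero => omega
  | succ k ih =>
    intro _
    by_cases hk0 : k = 0
    · subst hk0
      simp only [pow_one, Finset.Icc_self, Finset.sum_singleton]
      have := step_lemma hS ν hν0 hνadd hνsmul hball (b (2 * m)) (hb (2 * m)).1.1 m hm
        (hb (2 * m)).1.2
      simpa using this
    · have hk1 : 1 ≤ k := Nat.one_le_iff_ne_zero.2 hk0
      have hNpos : 0 < 2 ^ k * m := by positivity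
      have hstep := step_lemma hS ν hν0 hνadd hνsmul hball (b (2 * (2 ^ k * m)))
        (hb (2 * (2 ^ k * m))).1.1 (2 ^ k * m) hNpos (hb (2 * (2 ^ k * m))).1.2
      have h2 : 2 ^ (k + 1) * m = 2 * (2 ^ k * m) := by ring
      have hA : (0 : ℝ) ≤ ∑ j ∈ Finset.Icc 1 k, b (2 ^ j * m) :=
        Finset.sum_nonneg fun j _ => (hb (2 ^ j * m)).1.1
    -- combine
      rw [h2]
      refine hstep.trans ?_
      refine (Set.add_subset_add_right (ih hk1)).trans ?_
      rw [add_assoc]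
      refine Set.add_subset_add_left ?_
      have hsum : ∑ j ∈ Finset.Icc 1 (k + 1), b (2 ^ j * m) =
          (∑ j ∈ Finset.Icc 1 k, b (2 ^ j * m)) + b (2 ^ (k + 1) * m) :=
        Finset.sum_Icc_succ_top (by omega) _
      rw [hsum, (convex_convexHull ℝ _).add_smul hA (hb (2 ^ (k + 1) * m)).1.1, h2]
end

section
/- Let 1 ≤ m ≤ N with N ≥ 2, Ω the uniform probability space of m-subsets of {1,…,N}, ξ_i the indicator variables, and x_1,…,x_N ∈ ℝⁿ with ‖x_i‖₂² ≤ n·d² for all i. Set y = (1/N)Σx_i. Then E‖(1/m)Σ ξ_i x_i − y‖₂² ≤ n·d²/m. -/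
open Finset RealInnerProductSpace

lemma count_subset {α : Type*} [DecidableEq α] (s t : Finset α) (m : ℕ) (hts : t ⊆ s)
    (htm : t.card ≤ m) :
    ((powersetCard m s).filter (fun ω => t ⊆ ω)).card = (s.card - t.card).choose (m - t.card) := by
  rw [← Finset.card_sdiff_of_subset hts, ← card_powersetCard (m - t.card) (s \ t)]
  apply Finset.card_bij' (fun ω _ => ω \ t) (fun u _ => u ∪ t)
  · intro ω hω
    simp only [mem_filter, mem_powersetCard] at hω
    obtain ⟨⟨hsub, hcard⟩, htω⟩ := hω
    simp only [mem_powersetCard]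
    exact ⟨sdiff_subset_sdiff hsub le_rfl, by rw [card_sdiff_of_subset htω, hcard]⟩
  · intro u hu
    simp only [mem_powersetCard] at hu
    obtain ⟨hsub, hcard⟩ := hu
    have hdisj : Disjoint u t := ((sdiff_disjoint (s := t) (t := s)).mono_left hsub)
    simp only [mem_filter, mem_powersetCard]
    refine ⟨⟨union_subset (hsub.trans sdiff_subset) hts, ?_⟩, subset_union_right⟩
    rw [card_union_of_disjoint hdisj, hcard]
    omega
  · intro ω hω
    simp only [mem_filter] at hω
    exact sdiff_union_of_subset hω.2
  · intro u hu
    simp only [mem_powersetCard] at hu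
    have hdisj : Disjoint u t := ((sdiff_disjoint (s := t) (t := s)).mono_left hu.1)
    exact union_sdiff_cancel_right hdisj

lemma swap_count {β γ : Type*} (Ps : Finset β) (s : Finset γ) (c : γ → β → Prop)
    [∀ i ω, Decidable (c i ω)] (F : γ → ℝ) :
    ∑ ω ∈ Ps, ∑ i ∈ s.filter (fun i => c i ω), F i
      = ∑ i ∈ s, ((Ps.filter (fun ω => c i ω)).card : ℝ) * F i := by
  simp_rw [Finset.sum_filter]
  rw [Finset.sum_comm]
  refine Finset.sum_congr rfl fun i _ => ?_
  rw [← Finset.sum_filter, Finset.sum_const, nsmul_eq_mul]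

lemma final_ineq (S a t A C2 Kr M Nr nd : ℝ)
    (hS : S = M⁻¹ ^ 2 * ((A - C2) * a + C2 * (Nr ^ 2 * t)) - 2 * M⁻¹ * (A * (Nr * t)) + Kr * t)
    (hid1R : Nr * A = M * Kr) (hNb : Nr ^ 2 * C2 ≤ M ^ 2 * Kr)
    (ht0 : 0 ≤ t) (ha0 : 0 ≤ a) (haub : a ≤ Nr * nd)
    (hc10 : 0 ≤ A) (hc20 : 0 ≤ C2) (hM0 : 0 < M) (hK0 : 0 < Kr) :
    S / Kr ≤ nd / M := by
  rw [div_le_div_iff₀ hK0 hM0]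
  have hMne : M ≠ 0 := ne_of_gt hM0
  have hS' : M ^ 2 * S = (A - C2) * a + C2 * (Nr ^ 2 * t)
      - 2 * M * (A * (Nr * t)) + M ^ 2 * (Kr * t) := by
    rw [hS]; field_simp
  have e2 : M ^ 2 * S = (A - C2) * a + (Nr ^ 2 * C2 - M ^ 2 * Kr) * t := by
    linear_combination hS' - 2 * M * t * hid1R
  have hb1 : (Nr ^ 2 * C2 - M ^ 2 * Kr) * t ≤ 0 :=
    mul_nonpos_of_nonpos_of_nonneg (sub_nonpos.2 hNb) ht0
  have hb2 : (A - C2) * a ≤ A * a := by nlinarith [mul_nonneg hc20 ha0]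
  have hb3 : A * a ≤ A * (Nr * nd) := mul_le_mul_of_nonneg_left haub hc10
  have hb4 : A * (Nr * nd) = M * (Kr * nd) := by linear_combination nd * hid1R
  have hMS : M ^ 2 * S ≤ M * (Kr * nd) := by linarith
  have h5 : M * (S * M) ≤ M * (nd * Kr) := by nlinarith [hMS]
  exact le_of_mul_le_mul_left h5 hM0

theorem stmt_15 (N m n : ℕ) (hm : 1 ≤ m) (hmN : m ≤ N) (hN : 2 ≤ N) (d : ℝ) (hd : 0 < d)
    (x : Fin N → EuclideanSpace ℝ (Fin n)) (hx : ∀ i, ‖x i‖ ^ 2 ≤ n * d ^ 2)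
    (y : EuclideanSpace ℝ (Fin n)) (hy : y = (N : ℝ)⁻¹ • ∑ i, x i) :
    (∑ ω ∈ Finset.powersetCard m (Finset.univ : Finset (Fin N)),
        ‖(m : ℝ)⁻¹ • (∑ i ∈ ω, x i) - y‖ ^ 2) /
      (Finset.powersetCard m (Finset.univ : Finset (Fin N))).card ≤ n * d ^ 2 / m := by
  classical
  set P := Finset.powersetCard m (Finset.univ : Finset (Fin N)) with hP
  set c1 : ℕ := (N - 1).choose (m - 1) with hc1def
  set c2 : ℕ := if 2 ≤ m then (N - 2).choose (m - 2) else 0 with hc2def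
  set K : ℕ := N.choose m with hKdef
  have hPcard : P.card = K := by
    rw [hP, card_powersetCard, card_univ, Fintype.card_fin]
  -- counting lemmas
  have hcnt1 : ∀ i : Fin N, (P.filter fun ω => i ∈ ω).card = c1 := by
    intro i
    have h := count_subset (univ : Finset (Fin N)) {i} m (subset_univ _)
      (by simpa using hm)
    simp only [singleton_subset_iff, card_singleton, card_univ, Fintype.card_fin] at h
    exact h
  have hcnt2 : ∀ i j : Fin N, i ≠ j → (P.filter fun ω => i ∈ ω ∧ j ∈ ω).card = c2 := by
    intro i j hij
    by_cases h2 : 2 ≤ m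
    · have h := count_subset (univ : Finset (Fin N)) {i, j} m (subset_univ _)
        (by rw [card_pair hij]; exact h2)
      simp only [insert_subset_iff, singleton_subset_iff, card_pair hij, card_univ,
        Fintype.card_fin] at h
      rw [hc2def, if_pos h2, ← h]
    · rw [hc2def, if_neg h2]
      rw [Finset.card_eq_zero, Finset.filter_eq_empty_iff]
      rintro ω hω ⟨hi, hj⟩
      rw [hP, mem_powersetCard] at hω
      have hsub : ({i, j} : Finset (Fin N)) ⊆ ω := by
        intro z hz; simp only [mem_insert, mem_singleton] at hz
        rcases hz with rfl | rfl <;> assumption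
      have := Finset.card_le_card hsub
      rw [card_pair hij, hω.2] at this
      omega
  -- Nat identities
  have hid1 : N * c1 = m * K := by
    obtain ⟨N', rfl⟩ : ∃ N', N = N' + 1 := ⟨N - 1, by omega⟩
    obtain ⟨m', rfl⟩ : ∃ m', m = m' + 1 := ⟨m - 1, by omega⟩
    simp only [hc1def, hKdef, Nat.add_sub_cancel]
    exact (Nat.add_one_mul_choose_eq N' m').trans (Nat.mul_comm _ _)
  have hid2 : N * (N - 1) * c2 = m * (m - 1) * K := by
    by_cases h2 : 2 ≤ m
    · obtain ⟨N', rfl⟩ : ∃ N', N = N' + 2 := ⟨N - 2, by omega⟩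
      obtain ⟨m', rfl⟩ : ∃ m', m = m' + 2 := ⟨m - 2, by omega⟩
      simp only [hc2def, hKdef, if_pos h2, Nat.add_sub_cancel]
      have h1 := Nat.add_one_mul_choose_eq N' m'
      have h2' := Nat.add_one_mul_choose_eq (N' + 1) (m' + 1)
      have : ((N' : ℤ) + 2) * ((N' : ℤ) + 1) * ((N'.choose m' : ℕ) : ℤ)
          = ((m' : ℤ) + 2) * ((m' : ℤ) + 1) * (((N' + 2).choose (m' + 2) : ℕ) : ℤ) := by
        have h1c : ((N' : ℤ) + 1) * (N'.choose m' : ℤ)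
            = ((N' + 1).choose (m' + 1) : ℤ) * ((m' : ℤ) + 1) := by exact_mod_cast h1
        have h2c : ((N' : ℤ) + 2) * ((N' + 1).choose (m' + 1) : ℤ)
            = ((N' + 2).choose (m' + 2) : ℤ) * ((m' : ℤ) + 2) := by exact_mod_cast h2'
        linear_combination ((N' : ℤ) + 2) * h1c + ((m' : ℤ) + 1) * h2c
      have goal' : ((N' + 2) * (N' + 1) * N'.choose m' : ℤ)
          = ((m' + 2) * (m' + 1) * (N' + 2).choose (m' + 2) : ℤ) := by push_cast; linarith [this]
      have := goal'
      exact_mod_cast this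
    · have hm1 : m = 1 := by omega
      subst hm1
      simp [hc2def]
  have hc2le : c2 ≤ c1 := by
    by_cases h2 : 2 ≤ m
    · obtain ⟨N', rfl⟩ : ∃ N', N = N' + 2 := ⟨N - 2, by omega⟩
      obtain ⟨m', rfl⟩ : ∃ m', m = m' + 2 := ⟨m - 2, by omega⟩
      show (if 2 ≤ m' + 2 then (N' + 2 - 2).choose (m' + 2 - 2) else 0) ≤ (N' + 2 - 1).choose (m' + 2 - 1)
      rw [if_pos h2]
      show N'.choose m' ≤ (N' + 1).choose (m' + 1)
      rw [Nat.choose_succ_succ]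
      exact Nat.le_add_right _ _
    · simp [hc2def, if_neg h2]
  -- real abbreviations
  set M : ℝ := (m : ℝ) with hM
  set Nr : ℝ := (N : ℝ) with hNr
  have hM1 : (1 : ℝ) ≤ M := by rw [hM]; exact_mod_cast hm
  have hM0 : (0 : ℝ) < M := by linarith
  have hNr2 : (2 : ℝ) ≤ Nr := by rw [hNr]; exact_mod_cast hN
  have hNr0 : (0 : ℝ) < Nr := by linarith
  have hK0 : (0 : ℝ) < (K : ℝ) := by exact_mod_cast Nat.choose_pos hmN
  set a : ℝ := ∑ i, ‖x i‖ ^ 2 with ha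
  set t : ℝ := ⟪y, y⟫ with htdef
  have ht0 : (0 : ℝ) ≤ t := real_inner_self_nonneg
  have hSx : (∑ i, x i) = (N : ℝ) • y := by
    rw [hy, smul_smul, mul_inv_cancel₀ (by positivity), one_smul]
  -- per-ω expansion
  have hfilt : ∀ ω : Finset (Fin N), (univ : Finset (Fin N)).filter (fun i => i ∈ ω) = ω := by
    intro ω; ext i; simp
  have hprodfilt : ∀ ω : Finset (Fin N),
      ((univ ×ˢ univ : Finset (Fin N × Fin N)).filter (fun p => p.1 ∈ ω ∧ p.2 ∈ ω)) = ω ×ˢ ω := by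
    intro ω; ext p; simp [Finset.mem_product]
  have expand : ∀ ω : Finset (Fin N),
      ‖M⁻¹ • (∑ i ∈ ω, x i) - y‖ ^ 2
        = (M⁻¹) ^ 2 * (∑ p ∈ (univ ×ˢ univ : Finset (Fin N × Fin N)).filter
              (fun p => p.1 ∈ ω ∧ p.2 ∈ ω), ⟪x p.1, x p.2⟫)
          - 2 * M⁻¹ * (∑ i ∈ (univ : Finset (Fin N)).filter (fun i => i ∈ ω), ⟪x i, y⟫)
          + t := by
    intro ω
    rw [hprodfilt, hfilt]
    rw [norm_sub_sq_real, norm_smul, real_inner_smul_left, mul_pow]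
    have h1 : ‖∑ i ∈ ω, x i‖ ^ 2 = ∑ p ∈ ω ×ˢ ω, ⟪x p.1, x p.2⟫ := by
      rw [Finset.sum_product, ← real_inner_self_eq_norm_sq, sum_inner]
      exact Finset.sum_congr rfl fun i _ => inner_sum _ _ _
    have h2 : ⟪∑ i ∈ ω, x i, y⟫ = ∑ i ∈ ω, ⟪x i, y⟫ := sum_inner _ _ _
    have h3 : ‖y‖ ^ 2 = t := (real_inner_self_eq_norm_sq y).symm
    rw [h1, h2, h3]
    simp only [Real.norm_eq_abs, abs_inv]
    rw [abs_of_pos hM0]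
    ring
  set S : ℝ := ∑ ω ∈ P, ‖M⁻¹ • (∑ i ∈ ω, x i) - y‖ ^ 2 with hSdef
  -- evaluate quadratic part
  have hQ : ∑ ω ∈ P, (∑ p ∈ (univ ×ˢ univ : Finset (Fin N × Fin N)).filter
        (fun p => p.1 ∈ ω ∧ p.2 ∈ ω), ⟪x p.1, x p.2⟫)
      = ((c1 : ℝ) - c2) * a + (c2 : ℝ) * (Nr ^ 2 * t) := by
    rw [swap_count P (univ ×ˢ univ) (fun p ω => p.1 ∈ ω ∧ p.2 ∈ ω)
      (fun p => ⟪x p.1, x p.2⟫)]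
    have step1 : ∀ p ∈ (univ ×ˢ univ : Finset (Fin N × Fin N)),
        ((P.filter fun ω => p.1 ∈ ω ∧ p.2 ∈ ω).card : ℝ) * ⟪x p.1, x p.2⟫
          = (c2 : ℝ) * ⟪x p.1, x p.2⟫
            + (if p.1 = p.2 then ((c1 : ℝ) - c2) * ⟪x p.1, x p.2⟫ else 0) := by
      intro p _
      by_cases h : p.1 = p.2
      · rw [if_pos h]
        have : (P.filter fun ω => p.1 ∈ ω ∧ p.2 ∈ ω).card = c1 := by
          rw [← hcnt1 p.1]
          congr 1
          apply Finset.filter_congr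
          intro ω _; rw [← h]; simp
        rw [this]; ring
      · rw [if_neg h, hcnt2 p.1 p.2 h]; ring
    rw [Finset.sum_congr rfl step1, Finset.sum_add_distrib, ← Finset.mul_sum]
    have hbt : ∑ p ∈ (univ ×ˢ univ : Finset (Fin N × Fin N)), ⟪x p.1, x p.2⟫
        = Nr ^ 2 * t := by
      rw [Finset.sum_product]
      have : ∑ i : Fin N, ∑ j : Fin N, ⟪x i, x j⟫ = ⟪∑ i, x i, ∑ j, x j⟫ := by
        rw [sum_inner]
        exact Finset.sum_congr rfl fun i _ => (inner_sum _ _ _).symm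
      rw [this, hSx, real_inner_smul_left, real_inner_smul_right]
      ring
    have hdiag : ∑ p ∈ (univ ×ˢ univ : Finset (Fin N × Fin N)),
        (if p.1 = p.2 then ((c1 : ℝ) - c2) * ⟪x p.1, x p.2⟫ else 0)
        = ((c1 : ℝ) - c2) * a := by
      rw [Finset.sum_product]
      have : ∀ i : Fin N, ∑ j : Fin N,
          (if i = j then ((c1 : ℝ) - c2) * ⟪x i, x j⟫ else 0)
            = ((c1 : ℝ) - c2) * ‖x i‖ ^ 2 := by
        intro i
        rw [Finset.sum_ite_eq, if_pos (Finset.mem_univ i), real_inner_self_eq_norm_sq]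
      rw [Finset.sum_congr rfl fun i _ => this i, ← Finset.mul_sum, ← ha]
    rw [hbt, hdiag]; ring
  -- evaluate linear part
  have hL : ∑ ω ∈ P, (∑ i ∈ (univ : Finset (Fin N)).filter (fun i => i ∈ ω), ⟪x i, y⟫)
      = (c1 : ℝ) * (Nr * t) := by
    rw [swap_count P univ (fun i ω => i ∈ ω) (fun i => ⟪x i, y⟫)]
    have : ∀ i ∈ (univ : Finset (Fin N)),
        ((P.filter fun ω => i ∈ ω).card : ℝ) * ⟪x i, y⟫ = (c1 : ℝ) * ⟪x i, y⟫ := by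
      intro i _; rw [hcnt1 i]
    rw [Finset.sum_congr rfl this, ← Finset.mul_sum]
    have : ∑ i, ⟪x i, y⟫ = Nr * t := by
      rw [← sum_inner, hSx, real_inner_smul_left]
    rw [this]
  -- total sum
  have hS : S = (M⁻¹) ^ 2 * (((c1 : ℝ) - c2) * a + (c2 : ℝ) * (Nr ^ 2 * t))
      - 2 * M⁻¹ * ((c1 : ℝ) * (Nr * t)) + (K : ℝ) * t := by
    rw [hSdef, Finset.sum_congr rfl fun ω _ => expand ω]
    rw [Finset.sum_add_distrib, Finset.sum_sub_distrib, ← Finset.mul_sum, ← Finset.mul_sum,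
      hQ, hL, Finset.sum_const, hPcard, nsmul_eq_mul]
  -- cast identities to ℝ
  have hid1R : Nr * (c1 : ℝ) = M * K := by rw [hNr, hM]; exact_mod_cast hid1
  have hNb : Nr ^ 2 * (c2 : ℝ) ≤ M ^ 2 * K := by
    have hid2R : Nr * (Nr - 1) * (c2 : ℝ) = M * (M - 1) * K := by
      have : ((N * (N - 1) * c2 : ℕ) : ℝ) = ((m * (m - 1) * K : ℕ) : ℝ) := by
        exact_mod_cast hid2
      push_cast [Nat.cast_sub (by omega : 1 ≤ N), Nat.cast_sub hm] at this
      linarith [this]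
    have hc20 : (0 : ℝ) ≤ (c2 : ℝ) := Nat.cast_nonneg _
    have key : Nr ^ 2 * (c2 : ℝ) * (Nr - 1) ≤ M ^ 2 * K * (Nr - 1) := by
      have e1 : Nr ^ 2 * (c2 : ℝ) * (Nr - 1) = Nr * (Nr * (Nr - 1) * c2) := by ring
      rw [e1, hid2R]
      have hMN : M ≤ Nr := by rw [hM, hNr]; exact_mod_cast hmN
      have hstep : Nr * (M - 1) ≤ M * (Nr - 1) := by nlinarith [hMN]
      calc Nr * (M * (M - 1) * (K : ℝ)) = (M * K) * (Nr * (M - 1)) := by ring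
        _ ≤ (M * K) * (M * (Nr - 1)) := by
            apply mul_le_mul_of_nonneg_left hstep
            positivity
        _ = M ^ 2 * K * (Nr - 1) := by ring
    have hpos : (0 : ℝ) < Nr - 1 := by linarith
    exact le_of_mul_le_mul_right key hpos
  have hc10 : (0 : ℝ) ≤ (c1 : ℝ) := Nat.cast_nonneg _
  have hc20 : (0 : ℝ) ≤ (c2 : ℝ) := Nat.cast_nonneg _
  have hc2leR : (c2 : ℝ) ≤ (c1 : ℝ) := by exact_mod_cast hc2le
  have ha0 : (0 : ℝ) ≤ a := by
    rw [ha]; exact Finset.sum_nonneg fun i _ => sq_nonneg _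
  have haub : a ≤ Nr * (n * d ^ 2) := by
    rw [ha]
    calc ∑ i, ‖x i‖ ^ 2 ≤ ∑ _i : Fin N, (n * d ^ 2 : ℝ) := Finset.sum_le_sum fun i _ => hx i
      _ = Nr * (n * d ^ 2) := by rw [Finset.sum_const, card_univ, Fintype.card_fin, nsmul_eq_mul]
  -- finish
  rw [hPcard]
  exact final_ineq S a t (c1 : ℝ) (c2 : ℝ) (K : ℝ) M Nr ((n : ℝ) * d ^ 2)
    hS hid1R hNb ht0 ha0 haub hc10 hc20 hM0 hK0
end

section
/- Let Y be a finite-dimensional inner product space with unit ball 𝓔 and S ⊆ Y a set with 𝓔 ⊆ S ∪ (−S) + r·𝓔 and S ⊆ (1+η)𝓔, where 0 ≤ r < 1 and η ≥ 0. Then for every θ with r ≤ θ < 1, (1−θ)·𝓔 ⊆ Γ_θ S ⊆ (1+η)·𝓔, where Γ_θ S = {(1−θ)Σ_{k≥0} λ_k x_k : |λ_k| ≤ θ^k, x_k ∈ S}. -/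
open Pointwise

theorem stmt_18 {Y : Type*} [NormedAddCommGroup Y] [InnerProductSpace ℝ Y]
    [FiniteDimensional ℝ Y] (S : Set Y) (r η : ℝ) (hr0 : 0 ≤ r) (hr1 : r < 1) (hη : 0 ≤ η)
    (h1 : Metric.closedBall (0 : Y) 1 ⊆ (S ∪ -S) + r • Metric.closedBall (0 : Y) 1)
    (h2 : S ⊆ (1 + η) • Metric.closedBall (0 : Y) 1) :
    ∀ θ : ℝ, r ≤ θ → θ < 1 →
      (1 - θ) • Metric.closedBall (0 : Y) 1 ⊆ geomHull θ S ∧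
      geomHull θ S ⊆ (1 + η) • Metric.closedBall (0 : Y) 1 := by
  have hx_norm : ∀ x ∈ S, ‖x‖ ≤ 1 + η := by
    intro x hx
    obtain ⟨z, hz, rfl⟩ := h2 hx
    rw [Metric.mem_closedBall, dist_zero_right] at hz
    rw [norm_smul]
    calc ‖(1 + η : ℝ)‖ * ‖z‖ ≤ ‖(1 + η : ℝ)‖ * 1 := by
          exact mul_le_mul_of_nonneg_left hz (norm_nonneg _)
      _ = 1 + η := by rw [mul_one, Real.norm_eq_abs, abs_of_nonneg (by linarith)]
  intro θ hrθ hθ1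
  have hθ0 : 0 ≤ θ := hr0.trans hrθ
  have hθne : (1 - θ) ≠ 0 := by linarith
  constructor
  · rintro w ⟨y, hy, rfl⟩
    rw [Metric.mem_closedBall, dist_zero_right] at hy
    have step : ∀ v : Y, ‖v‖ ≤ 1 → ∃ p : ℝ × Y × Y,
        |p.1| = 1 ∧ p.2.1 ∈ S ∧ ‖p.2.2‖ ≤ 1 ∧ v = p.1 • p.2.1 + r • p.2.2 := by
      intro v hv
      have hv' : v ∈ (S ∪ -S) + r • Metric.closedBall (0 : Y) 1 :=
        h1 (by rwa [Metric.mem_closedBall, dist_zero_right])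
      rw [Set.mem_add] at hv'
      obtain ⟨a, ha, b, hb, hab⟩ := hv'
      obtain ⟨z, hz, rfl⟩ := hb
      rw [Metric.mem_closedBall, dist_zero_right] at hz
      rcases ha with ha | ha
      · exact ⟨(1, a, z), by simp, ha, hz, by rw [← hab]; simp⟩
      · refine ⟨(-1, -a, z), by simp, ha, hz, ?_⟩
        rw [← hab]; simp
    choose p hp1 hp2 hp3 hp4 using step
    let next : {v : Y // ‖v‖ ≤ 1} → {v : Y // ‖v‖ ≤ 1} :=
      fun v => ⟨(p v.1 v.2).2.2, hp3 v.1 v.2⟩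
    let w : ℕ → {v : Y // ‖v‖ ≤ 1} := fun n => next^[n] ⟨y, hy⟩
    set ε : ℕ → ℝ := fun n => (p (w n).1 (w n).2).1 with hε
    set x : ℕ → Y := fun n => (p (w n).1 (w n).2).2.1 with hx
    have hrec : ∀ n, (w n : Y) = ε n • x n + r • (w (n + 1) : Y) := by
      intro n
      have : w (n + 1) = next (w n) := by
        show next^[n + 1] _ = _
        rw [Function.iterate_succ_apply']
      rw [this]
      exact hp4 (w n).1 (w n).2
    have hpartial : ∀ n, ∑ k ∈ Finset.range n, (r ^ k * ε k) • x k
        = y - r ^ n • (w n : Y) := by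
      intro n
      induction n with
      | zero => simp [w]
      | succ n ih =>
        rw [Finset.sum_range_succ, ih, hrec n]
        rw [smul_add, smul_smul, smul_smul]
        ring_nf
        abel
    have hcbound : ∀ k, |r ^ k * ε k| ≤ θ ^ k := by
      intro k
      rw [abs_mul, hp1 (w k).1 (w k).2, mul_one, abs_of_nonneg (pow_nonneg hr0 k)]
      exact pow_le_pow_left₀ hr0 hrθ k
    have hsummable : Summable (fun k => (r ^ k * ε k) • x k) := by
      apply Summable.of_norm_bounded (g := fun k => (1 + η) * θ ^ k)
        ((summable_geometric_of_lt_one hθ0 hθ1).mul_left _)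
      intro k
      rw [norm_smul, Real.norm_eq_abs]
      calc |r ^ k * ε k| * ‖x k‖ ≤ θ ^ k * (1 + η) := by
            apply mul_le_mul (hcbound k) (hx_norm _ (hp2 (w k).1 (w k).2))
              (norm_nonneg _) (pow_nonneg hθ0 k)
        _ = (1 + η) * θ ^ k := by ring
    have htend : Filter.Tendsto (fun n => ∑ k ∈ Finset.range n, (r ^ k * ε k) • x k)
        Filter.atTop (nhds y) := by
      simp only [hpartial]
      have h0 : Filter.Tendsto (fun n => r ^ n • (w n : Y)) Filter.atTop (nhds 0) := by
        apply squeeze_zero_norm (a := fun n => r ^ n) ?_ (tendsto_pow_atTop_nhds_zero_of_lt_one hr0 hr1)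
        intro n
        rw [norm_smul, Real.norm_eq_abs, abs_of_nonneg (pow_nonneg hr0 n)]
        calc r ^ n * ‖(w n : Y)‖ ≤ r ^ n * 1 :=
              mul_le_mul_of_nonneg_left (w n).2 (pow_nonneg hr0 n)
          _ = r ^ n := mul_one _
      have := Filter.Tendsto.sub (tendsto_const_nhds (x := y)) h0
      simpa using this
    have hhs : HasSum (fun k => (r ^ k * ε k) • x k) y :=
      (hsummable.hasSum_iff_tendsto_nat).2 htend
    refine ⟨fun k => r ^ k * ε k, x, hcbound, fun k => hp2 (w k).1 (w k).2, ?_⟩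
    have := hhs.const_smul (1 - θ)
    convert this using 2 with k
    rw [smul_smul]
  · rintro v ⟨c, x, hc, hxS, hsum⟩
    have hnorm : ∀ k, ‖((1 - θ) * c k) • x k‖ ≤ (1 - θ) * (1 + η) * θ ^ k := by
      intro k
      rw [norm_smul, Real.norm_eq_abs, abs_mul, abs_of_nonneg (by linarith : (0:ℝ) ≤ 1 - θ)]
      calc (1 - θ) * |c k| * ‖x k‖ ≤ (1 - θ) * θ ^ k * (1 + η) := by
            apply mul_le_mul (mul_le_mul_of_nonneg_left (hc k) (by linarith))
              (hx_norm _ (hxS k)) (norm_nonneg _)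
            exact mul_nonneg (by linarith) (pow_nonneg hθ0 k)
        _ = (1 - θ) * (1 + η) * θ ^ k := by ring
    have hg : Summable (fun k => (1 - θ) * (1 + η) * θ ^ k) :=
      (summable_geometric_of_lt_one hθ0 hθ1).mul_left _
    have hs : Summable (fun k => ‖((1 - θ) * c k) • x k‖) :=
      Summable.of_nonneg_of_le (fun k => norm_nonneg _) hnorm hg
    have hv : ‖v‖ ≤ 1 + η := by
      have h1' : ‖v‖ ≤ ∑' k, ‖((1 - θ) * c k) • x k‖ := by
        rw [← hsum.tsum_eq]
        exact norm_tsum_le_tsum_norm hs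
      have h2' : ∑' k, ‖((1 - θ) * c k) • x k‖ ≤ ∑' k, (1 - θ) * (1 + η) * θ ^ k :=
        Summable.tsum_le_tsum hnorm hs hg
      have h3' : ∑' k, (1 - θ) * (1 + η) * θ ^ k = 1 + η := by
        rw [tsum_mul_left, tsum_geometric_of_lt_one hθ0 hθ1]
        field_simp
      linarith
    have h1η : (0:ℝ) < 1 + η := by linarith
    refine ⟨(1 + η)⁻¹ • v, ?_, ?_⟩
    · rw [Metric.mem_closedBall, dist_zero_right, norm_smul, Real.norm_eq_abs,
        abs_of_nonneg (inv_nonneg.2 h1η.le)]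
      rw [inv_mul_le_iff₀ h1η]
      linarith
    · show (1 + η) • ((1 + η)⁻¹ • v) = v
      rw [smul_inv_smul₀ h1η.ne']
end

section
/- Let 0 < ε < 1, let n, k be integers with 0 < k < n and 1 − k/n = tε/(1 − ln ε) for some 0 < t ≤ 1/2. Then log₂ C(n,k) ≤ n·t·ε·ln(e·ln(e/ε)/(t·ε))/((1 − ln ε)·ln 2), and this is at most 3·k·t·ε·(2 − ln t). -/
open Real Finset

lemma pow_self_le_factorial_mul_exp (m : ℕ) :
    (m : ℝ) ^ m ≤ (m.factorial : ℝ) * Real.exp m := by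
  have h1 : (m : ℝ) ^ m / (m.factorial : ℝ) ≤ Real.exp m := by
    calc (m : ℝ) ^ m / (m.factorial : ℝ)
        ≤ ∑ i ∈ range (m + 1), (m : ℝ) ^ i / i.factorial := by
          refine Finset.single_le_sum (f := fun i => (m : ℝ) ^ i / i.factorial) ?_ ?_
          · intro i _; positivity
          · simp
      _ ≤ Real.exp m := Real.sum_le_exp_of_nonneg (by positivity) _
  have hf : (0 : ℝ) < m.factorial := by exact_mod_cast m.factorial_pos
  calc (m : ℝ) ^ m = (m : ℝ) ^ m / m.factorial * m.factorial := by field_simp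
    _ ≤ Real.exp m * m.factorial := mul_le_mul_of_nonneg_right h1 hf.le
    _ = (m.factorial : ℝ) * Real.exp m := by ring

lemma choose_le_en_div_pow {n k : ℕ} (hkn : k < n) :
    (n.choose k : ℝ) ≤ ((n : ℝ) * Real.exp 1 / (n - k : ℕ)) ^ (n - k : ℕ) := by
  set m := n - k with hm
  have hm0 : 0 < m := Nat.sub_pos_of_lt hkn
  have hsymm : n.choose k = n.choose m := by
    exact (Nat.choose_symm hkn.le).symm
  have h1 : (n.choose m : ℝ) ≤ (n : ℝ) ^ m / m.factorial :=
    Nat.choose_le_pow_div m n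
  have hA := pow_self_le_factorial_mul_exp m
  have hmpos : (0 : ℝ) < m := by exact_mod_cast hm0
  have hf : (0 : ℝ) < m.factorial := by exact_mod_cast m.factorial_pos
  have hn0 : (0 : ℝ) < n := by exact_mod_cast Nat.pos_of_ne_zero (by omega)
  have h2 : (n : ℝ) ^ m / m.factorial ≤ ((n : ℝ) * Real.exp 1 / m) ^ m := by
    rw [div_pow, mul_pow, Real.exp_one_pow, div_le_div_iff₀ hf (pow_pos hmpos m)]
    nlinarith [pow_nonneg hn0.le m, hA, Real.exp_pos (m:ℝ)]
  calc (n.choose k : ℝ) = (n.choose m : ℝ) := by rw [hsymm]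
    _ ≤ (n : ℝ) ^ m / m.factorial := h1
    _ ≤ ((n : ℝ) * Real.exp 1 / m) ^ m := h2
theorem stmt_19 (ε t : ℝ) (n k : ℕ) (hε0 : 0 < ε) (hε1 : ε < 1)
    (hk0 : 0 < k) (hkn : k < n) (ht0 : 0 < t) (ht : t ≤ 1 / 2)
    (hdef : 1 - (k : ℝ) / n = t * ε / (1 - Real.log ε)) :
    Real.logb 2 (n.choose k) ≤
      (n : ℝ) * t * ε * Real.log (Real.exp 1 * Real.log (Real.exp 1 / ε) / (t * ε)) /
        ((1 - Real.log ε) * Real.log 2) ∧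
    (n : ℝ) * t * ε * Real.log (Real.exp 1 * Real.log (Real.exp 1 / ε) / (t * ε)) /
        ((1 - Real.log ε) * Real.log 2) ≤ 3 * k * t * ε * (2 - Real.log t) := by
  have hlogε : Real.log ε < 0 := Real.log_neg hε0 hε1
  obtain ⟨L, hL⟩ : ∃ L, L = 1 - Real.log ε := ⟨_, rfl⟩
  rw [← hL] at hdef ⊢
  have hL1 : 1 < L := by rw [hL]; linarith
  have hL0 : 0 < L := by linarith
  have hln2 : 0 < Real.log 2 := Real.log_pos (by norm_num)
  have htε : 0 < t * ε := mul_pos ht0 hε0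
  have hn0 : (0:ℝ) < n := by exact_mod_cast hk0.trans hkn
  have hlogeε : Real.log (Real.exp 1 / ε) = L := by
    rw [Real.log_div (Real.exp_ne_zero 1) (ne_of_gt hε0), Real.log_exp, hL]
  rw [hlogeε]
  obtain ⟨X, hXdef⟩ : ∃ X, X = Real.log (Real.exp 1 * L / (t * ε)) := ⟨_, rfl⟩
  rw [← hXdef]
  obtain ⟨m, hm⟩ : ∃ m, m = n - k := ⟨_, rfl⟩
  have hmr : ((m : ℕ) : ℝ) = (n:ℝ) - k := by
    rw [hm]; push_cast [Nat.cast_sub hkn.le]; ring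
  have hmeq : ((m:ℕ) : ℝ) = n * (t * ε / L) := by
    rw [hmr]
    have h : ((n:ℝ) - k)/n = t * ε / L := by
      rw [← hdef]; field_simp
    field_simp at h ⊢
    linarith [h]
  have hm0 : (0:ℝ) < m := by rw [hmeq]; positivity
  have hmL : ((m:ℕ):ℝ) * L = n * (t * ε) := by
    rw [hmeq]; field_simp
  -- argument identity
  have harg : (n : ℝ) * Real.exp 1 / m = Real.exp 1 * L / (t * ε) := by
    rw [hmeq]; field_simp
  have hC : (n.choose k : ℝ) ≤ (Real.exp 1 * L / (t * ε)) ^ (m:ℕ) := by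
    rw [← harg, hm]; exact choose_le_en_div_pow hkn
  have hCpos : (0:ℝ) < n.choose k := by exact_mod_cast Nat.choose_pos hkn.le
  have hlogC : Real.log (n.choose k) ≤ (m:ℕ) * X := by
    calc Real.log (n.choose k) ≤ Real.log ((Real.exp 1 * L / (t * ε)) ^ (m:ℕ)) :=
          Real.log_le_log hCpos hC
      _ = (m:ℕ) * X := by rw [Real.log_pow, hXdef]
  have hRHS1 : (n : ℝ) * t * ε * X / (L * Real.log 2) = (m:ℕ) * X / Real.log 2 := by
    rw [div_eq_div_iff (by positivity) (ne_of_gt hln2)]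
    linear_combination (-X) * Real.log 2 * hmL
  constructor
  · rw [hRHS1, Real.logb]
    gcongr
  · rw [hRHS1]
    -- part 2
    have hlogt : Real.log t < 0 := Real.log_neg ht0 (by linarith)
    have hlogL : Real.log L ≤ L - 1 := Real.log_le_sub_one_of_pos hL0
    have hlogL0 : 0 < Real.log L := Real.log_pos hL1
    have hX : X = L + Real.log L - Real.log t := by
      rw [hXdef, Real.log_div (by positivity) (ne_of_gt htε), Real.log_mul (Real.exp_ne_zero 1) (ne_of_gt hL0), Real.log_mul (ne_of_gt ht0) (ne_of_gt hε0), Real.log_exp, hL]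
      ring
    have hXle : X ≤ 2*L - Real.log t := by rw [hX]; linarith
    have hl2 : (0.6931471803:ℝ) < Real.log 2 := Real.log_two_gt_d9
    have hc : (1:ℝ) ≤ (3/2) * Real.log 2 * L := by
      have h1' : (1:ℝ) ≤ (3/2) * Real.log 2 := by linarith
      calc (1:ℝ) ≤ (3/2) * Real.log 2 := h1'
        _ ≤ (3/2) * Real.log 2 * L := le_mul_of_one_le_right (by linarith) hL1.le
    have h1 : -Real.log t ≤ (3/2) * Real.log 2 * L * (-Real.log t) := by
      have := mul_le_mul_of_nonneg_right hc (show (0:ℝ) ≤ -Real.log t by linarith)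
      linarith
    have h2 : 2*L ≤ 3 * Real.log 2 * L := by
      have : 0 ≤ (3 * Real.log 2 - 2) * L := mul_nonneg (by linarith) hL0.le
      linarith
    have key : X ≤ (3/2) * Real.log 2 * L * (2 - Real.log t) := by linarith
    have hk2 : (n:ℝ) ≤ 2 * k := by
      have htε2 : t * ε < 1/2 := by
        have := mul_lt_mul_of_pos_left hε1 ht0
        rw [mul_one] at this; linarith
      have hq : t * ε / L < 1/2 := by
        rw [div_lt_iff₀ hL0]
        have : (1:ℝ)/2 * 1 ≤ 1/2 * L := by linarith
        linarith
      have h3 : ((m:ℕ):ℝ) ≤ (n:ℝ) * (1/2) := by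
        rw [hmeq]
        exact mul_le_mul_of_nonneg_left hq.le hn0.le
      rw [hmr] at h3; linarith
    rw [div_le_iff₀ hln2]
    have step : ((m:ℕ):ℝ) * X ≤ ((m:ℕ):ℝ) * ((3/2) * Real.log 2 * L * (2 - Real.log t)) :=
      mul_le_mul_of_nonneg_left key hm0.le
    have h2logt : 0 < 2 - Real.log t := by linarith
    calc ((m:ℕ):ℝ) * X ≤ ((m:ℕ):ℝ) * ((3/2) * Real.log 2 * L * (2 - Real.log t)) := step
      _ = (3/2) * Real.log 2 * (2 - Real.log t) * (((m:ℕ):ℝ) * L) := by ring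
      _ = (3/2) * Real.log 2 * (2 - Real.log t) * ((n:ℝ) * (t*ε)) := by rw [hmL]
      _ ≤ 3 * k * t * ε * (2 - Real.log t) * Real.log 2 := by
          have hC2 : (0:ℝ) ≤ Real.log 2 * (2 - Real.log t) * (t * ε) :=
            mul_nonneg (mul_nonneg hln2.le h2logt.le) htε.le
          have h4 := mul_le_mul_of_nonneg_left hk2 hC2
          linarith [h4]
end
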